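/- arXiv:2601.10870 — 3 statements merged into one kernel-verified Lean document; each statement's English description precedes it below -/
import Mathlib

section
/- Let n ≥ 1 be an integer. Then det(K_{i,j})_{1≤i,j≤n} = 4^{n(n−1)/2} · n!, where K_{i,j} = Σ_{k = −n+1}^{n} k · C(2j + k − 3, i − 1) · C(n, j + k − 1) is an integer matrix. -/
open Finset Polynomial

/-- Binomial coefficient of two integers, with `C a 0 = 1` for every integer `a`,
and `C a b = 0` whenever `b < 0` or (`b > 0` and `b > a`). -/
def intChoose (a b : ℤ) : ℤ :=
  if b = 0 then 1 else if 0 < b ∧ b ≤ a then (a.toNat.choose b.toNat : ℤ) else 0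

lemma intChoose_natCast (a b : ℕ) : intChoose a b = (a.choose b : ℤ) := by
  unfold intChoose
  split_ifs with h1 h2
  · simp [show b = 0 by exact_mod_cast h1]
  · simp
  · have hb : a < b := by omega
    rw [Nat.choose_eq_zero_of_lt hb]; simp

lemma intChoose_eq_zero {n : ℕ} {z : ℤ} (h : z < 0 ∨ (n:ℤ) < z) : intChoose n z = 0 := by
  unfold intChoose
  split_ifs with h1 h2
  · omega
  · omega
  · rfl

-- binomial theorem sums
lemma sum_binom (N : ℕ) :
    ∑ m ∈ range (N+1), ((N.choose m : ℤ)) • ((X+1:ℤ[X])^m) = (X+2)^N := by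
  have h := add_pow (X+1 : ℤ[X]) 1 N
  simp only [one_pow, mul_one] at h
  rw [show (X+2:ℤ[X]) = X+1+1 by ring, h]
  apply Finset.sum_congr rfl
  intro m hm
  rw [smul_eq_C_mul, Polynomial.C_eq_natCast]
  ring

lemma sum_m_binom' (N : ℕ) :
    ∑ m ∈ range (N+1), (((m:ℤ)+1) * ((N+1).choose (m+1) : ℤ)) • ((X+1:ℤ[X])^m)
      = ((N:ℤ)+1) • (X+2:ℤ[X])^N := by
  conv_rhs => rw [← sum_binom N]
  rw [Finset.smul_sum]
  apply Finset.sum_congr rfl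
  intro m hm
  have h := Nat.add_one_mul_choose_eq N m
  have h' : ((N:ℤ)+1) * (N.choose m : ℤ) = ((N+1).choose (m+1) : ℤ) * ((m:ℤ)+1) := by
    exact_mod_cast congrArg (Nat.cast : ℕ → ℤ) h
  rw [smul_smul]
  congr 1
  linarith [h']

lemma sum_m_binom (N : ℕ) :
    ∑ m ∈ range (N+2), ((m:ℤ) * ((N+1).choose m : ℤ)) • ((X+1:ℤ[X])^m)
      = ((N:ℤ)+1) • ((X+1) * (X+2:ℤ[X])^N) := by
  rw [Finset.sum_range_succ']
  simp only [Nat.cast_zero, zero_mul, zero_smul, add_zero]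
  have h : ∀ m ∈ range (N+1), ((((m+1:ℕ)):ℤ) * ((N+1).choose (m+1) : ℤ)) • ((X+1:ℤ[X])^(m+1))
      = (X+1) * ((((m:ℤ)+1) * ((N+1).choose (m+1) : ℤ)) • ((X+1:ℤ[X])^m)) := by
    intro m hm
    rw [pow_succ, mul_comm ((X+1:ℤ[X])^m) (X+1), mul_smul_comm]
    push_cast
    ring_nf
  rw [Finset.sum_congr rfl h, ← Finset.mul_sum, sum_m_binom']
  rw [mul_smul_comm]

lemma keyPoly (N j : ℕ) :
    ∑ m ∈ range (N+2), (((m:ℤ) - j) * ((N+1).choose m : ℤ)) • ((X+1:ℤ[X])^(m+j-1))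
    = (X+2)^N * (((N:ℤ)+1-j) • (X+1:ℤ[X])^j - (j:ℤ) • (X+1:ℤ[X])^(j-1)) := by
  cases j with
  | zero =>
    simp only [Nat.cast_zero, sub_zero, zero_smul, sub_zero, Nat.sub_zero, pow_zero]
    rw [Finset.sum_range_succ']
    simp only [Nat.cast_zero, zero_mul, zero_smul, add_zero]
    have h : ∀ m ∈ range (N+1), ((((m+1:ℕ)):ℤ) * ((N+1).choose (m+1) : ℤ)) • ((X+1:ℤ[X])^(m+1-1))
        = (((m:ℤ)+1) * ((N+1).choose (m+1) : ℤ)) • ((X+1:ℤ[X])^m) := by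
      intro m hm
      push_cast
      norm_num
    rw [Finset.sum_congr rfl h, sum_m_binom']
    rw [smul_eq_C_mul, smul_eq_C_mul]
    ring
  | succ j' =>
    have e1 : ∀ m ∈ range (N+2), (((m:ℤ) - (j'+1:ℕ)) * ((N+1).choose m : ℤ)) • ((X+1:ℤ[X])^(m+(j'+1)-1))
        = (((m:ℤ) * ((N+1).choose m : ℤ)) • ((X+1:ℤ[X])^m)
          - ((j':ℤ)+1) • (((N+1).choose m : ℤ) • ((X+1:ℤ[X])^m))) * (X+1)^j' := by
      intro m hm
      have : m + (j'+1) - 1 = m + j' := by omega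
      rw [this, pow_add]
      simp only [smul_eq_C_mul, map_sub, map_add, map_mul, map_one, map_natCast]
      push_cast
      ring
    rw [Finset.sum_congr rfl e1, ← Finset.sum_mul, Finset.sum_sub_distrib, sum_m_binom,
      ← Finset.smul_sum, sum_binom (N+1)]
    have h2 : (X+2:ℤ[X])^(N+1) = (X+2)^N * (X+2) := by ring
    rw [h2]
    simp only [smul_eq_C_mul, map_sub, map_add, map_one, map_natCast]
    push_cast
    ring

lemma K_entry (N i j : ℕ) (hj : j ≤ N) :
    ∑ k ∈ Finset.Icc (-(((N:ℤ)+1)) + 1) ((N:ℤ)+1),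
        k * intChoose (2 * ((j : ℤ) + 1) + k - 3) (((i : ℤ) + 1) - 1) *
          intChoose ((N:ℤ)+1) (((j : ℤ) + 1) + k - 1)
    = ((X+2:ℤ[X])^N * (((N:ℤ)+1-j) • (X+1:ℤ[X])^j - (j:ℤ) • (X+1:ℤ[X])^(j-1))).coeff i := by
  rw [← keyPoly N j, Polynomial.finset_sum_coeff]
  have step1 : ∑ k ∈ Finset.Icc (-(((N:ℤ)+1)) + 1) ((N:ℤ)+1),
        k * intChoose (2 * ((j : ℤ) + 1) + k - 3) (((i : ℤ) + 1) - 1) *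
          intChoose ((N:ℤ)+1) (((j : ℤ) + 1) + k - 1)
      = ∑ m ∈ Finset.Icc ((j:ℤ) - N) ((j:ℤ) + N + 1),
          (m - j) * intChoose (m + j - 1) i * intChoose ((N:ℤ)+1) m := by
    refine Finset.sum_bij' (fun k _ => k + (j:ℤ)) (fun m _ => m - (j:ℤ)) ?_ ?_ ?_ ?_ ?_
    · intro k hk; simp only [Finset.mem_Icc] at hk ⊢; omega
    · intro m hm; simp only [Finset.mem_Icc] at hm ⊢; omega
    · intro k hk; ring
    · intro m hm; ring
    · intro k hk
      have h1 : 2 * ((j : ℤ) + 1) + k - 3 = (k + j) + j - 1 := by ring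
      have h2 : ((j : ℤ) + 1) + k - 1 = k + j := by ring
      have h3 : ((i : ℤ) + 1) - 1 = i := by ring
      rw [h1, h2, h3]
      ring_nf
  rw [step1]
  have step2 : ∑ m ∈ Finset.Icc ((j:ℤ) - N) ((j:ℤ) + N + 1),
          (m - j) * intChoose (m + j - 1) i * intChoose ((N:ℤ)+1) m
      = ∑ m ∈ Finset.Icc (0:ℤ) ((N:ℤ) + 1),
          (m - j) * intChoose (m + j - 1) i * intChoose ((N:ℤ)+1) m := by
    symm
    apply Finset.sum_subset
    · intro m hm; simp only [Finset.mem_Icc] at *; omega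
    · intro m hm hnm
      simp only [Finset.mem_Icc] at hm hnm
      have : intChoose ((N:ℤ)+1) m = 0 := by
        have : ((N:ℤ)+1) = ((N+1 : ℕ) : ℤ) := by push_cast; ring
        rw [this]
        apply intChoose_eq_zero
        push_cast
        omega
      rw [this, mul_zero]
  rw [step2]
  refine Finset.sum_bij' (fun m _ => m.toNat) (fun m _ => ((m:ℕ):ℤ)) ?_ ?_ ?_ ?_ ?_
  · intro m hm; simp only [Finset.mem_Icc] at hm; simp only [Finset.mem_range]; omega
  · intro m hm; simp only [Finset.mem_range] at hm; simp only [Finset.mem_Icc]; omega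
  · intro m hm; simp only [Finset.mem_Icc] at hm
    show ((m.toNat : ℕ) : ℤ) = m; omega
  · intro m hm; simp only [Finset.mem_range] at hm
    show ((m : ℕ) : ℤ).toNat = m; omega
  · intro m hm
    simp only [Finset.mem_Icc] at hm
    rw [Polynomial.coeff_smul, Polynomial.coeff_X_add_one_pow, smul_eq_mul]
    by_cases hmj : m.toNat + j = 0
    · have hm0 : m = 0 := by omega
      have hj0 : j = 0 := by omega
      subst hj0
      subst hm0
      simp
    · have h1 : m + (j:ℤ) - 1 = ((m.toNat + j - 1 : ℕ) : ℤ) := by push_cast; omega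
      have h2 : m = ((m.toNat : ℕ) : ℤ) := by omega
      rw [h1, intChoose_natCast]
      have h3 : intChoose ((N:ℤ)+1) m = (((N+1).choose m.toNat : ℕ) : ℤ) := by
        have h4 := intChoose_natCast (N+1) m.toNat
        rw [show ((m.toNat:ℕ):ℤ) = m by omega,
          show (((N+1:ℕ)):ℤ) = (N:ℤ)+1 by push_cast; ring] at h4
        exact h4
      rw [h3, show ((m.toNat:ℤ)) = m by omega]
      ring

noncomputable def Amat (N : ℕ) : Matrix (Fin (N+1)) (Fin (N+1)) ℤ :=
  Matrix.of fun i l => ((X+2:ℤ[X])^N * (X+1)^(l:ℕ)).coeff i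

noncomputable def Tmat (N : ℕ) : Matrix (Fin (N+1)) (Fin (N+1)) ℤ :=
  Matrix.of fun i t => if (t:ℕ) ≤ (i:ℕ) then ((X+2:ℤ[X])^N).coeff ((i:ℕ)-(t:ℕ)) else 0

noncomputable def Pmat (N : ℕ) : Matrix (Fin (N+1)) (Fin (N+1)) ℤ :=
  Matrix.of fun t l => ((X+1:ℤ[X])^(l:ℕ)).coeff t

noncomputable def Smat (N : ℕ) : Matrix (Fin (N+1)) (Fin (N+1)) ℤ :=
  Matrix.of fun l j => (if (l:ℕ) = (j:ℕ) then ((N:ℤ)+1-(j:ℕ)) else 0)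
    + (if (j:ℕ) = (l:ℕ)+1 then -((j:ℕ):ℤ) else 0)

lemma AS_entry (N : ℕ) (i j : Fin (N+1)) :
    (Amat N * Smat N) i j
    = ((N:ℤ)+1-(j:ℕ)) * ((X+2:ℤ[X])^N*(X+1)^(j:ℕ)).coeff i
      - ((j:ℕ):ℤ) * ((X+2:ℤ[X])^N*(X+1)^((j:ℕ)-1)).coeff i := by
  rw [Matrix.mul_apply]
  simp only [Amat, Smat, Matrix.of_apply, mul_add, Finset.sum_add_distrib]
  congr 1
  · simp only [mul_ite, mul_zero, Fin.val_eq_val]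
    rw [Finset.sum_ite_eq' Finset.univ j]
    simp [mul_comm]
  · rcases hj : (j:ℕ) with _ | j'
    · simp [hj]
    · have hj' : j' < N + 1 := by omega
      have hcond : ∀ l : Fin (N+1), (j' + 1 = (l:ℕ)+1) ↔ l = ⟨j', hj'⟩ := by
        intro l
        constructor
        · intro h; apply Fin.ext; simp; omega
        · intro h; subst h; simp
      simp only [mul_ite, mul_zero, hcond]
      rw [Finset.sum_ite_eq' Finset.univ]
      simp [mul_comm]
      ring

lemma A_eq_TP (N : ℕ) : Amat N = Tmat N * Pmat N := by
  ext i l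
  rw [Matrix.mul_apply]
  simp only [Amat, Tmat, Pmat, Matrix.of_apply]
  rw [mul_comm ((X+2:ℤ[X])^N), Polynomial.coeff_mul,
    Finset.Nat.sum_antidiagonal_eq_sum_range_succ_mk]
  rw [Fin.sum_univ_eq_sum_range (fun t =>
    (if t ≤ (i:ℕ) then ((X+2:ℤ[X])^N).coeff ((i:ℕ)-t) else 0) * ((X+1:ℤ[X])^(l:ℕ)).coeff t)]
  rw [← Finset.sum_subset (Finset.range_subset_range.mpr (show (i:ℕ)+1 ≤ N+1 by omega))
    (fun t _ ht => by
      have : ¬ t ≤ (i:ℕ) := by simp at ht ⊢; omega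
      simp [this])]
  apply Finset.sum_congr rfl
  intro t ht
  simp only [Finset.mem_range] at ht
  rw [if_pos (by omega)]
  ring

lemma det_T (N : ℕ) : (Tmat N).det = 2 ^ (N * (N+1)) := by
  rw [Matrix.det_of_lowerTriangular (Tmat N)
    (by intro i t h; simp only [OrderDual.toDual_lt_toDual] at h
        simp only [Tmat, Matrix.of_apply]
        rw [if_neg (by exact fun hc => absurd h (by exact not_lt.mpr (by exact_mod_cast hc)))])]
  have hdiag : ∀ i : Fin (N+1), Tmat N i i = 2 ^ N := by
    intro i
    simp only [Tmat, Matrix.of_apply, le_refl, if_true, Nat.sub_self]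
    rw [Polynomial.coeff_zero_eq_eval_zero]
    simp
  rw [Finset.prod_congr rfl (fun i _ => hdiag i), Finset.prod_const]
  simp [← pow_mul, mul_comm]

lemma det_P (N : ℕ) : (Pmat N).det = 1 := by
  have hmono : (X+1:ℤ[X]).Monic := by
    have := Polynomial.monic_X_add_C (1:ℤ)
    simpa using this
  have hdeg : ∀ l : ℕ, ((X+1:ℤ[X])^l).natDegree = l := by
    intro l
    rw [hmono.natDegree_pow, show (X+1:ℤ[X]) = X + Polynomial.C 1 by simp,
      Polynomial.natDegree_X_add_C, mul_one]
  rw [Matrix.det_of_upperTriangular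
    (by intro t l h; simp only [Pmat, Matrix.of_apply]
        apply Polynomial.coeff_eq_zero_of_natDegree_lt
        rw [hdeg]; exact_mod_cast h)]
  have : ∀ l : Fin (N+1), Pmat N l l = 1 := by
    intro l
    simp only [Pmat, Matrix.of_apply]
    have := (hmono.pow (l:ℕ)).coeff_natDegree
    rwa [hdeg] at this
  rw [Finset.prod_congr rfl (fun l _ => this l)]
  simp

lemma prod_range_fact (n : ℕ) : ∏ j ∈ Finset.range n, (j+1) = n.factorial := by
  induction n with
  | zero => simp
  | succ n ih => rw [Finset.prod_range_succ, ih, Nat.factorial_succ]; ring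

lemma det_S (N : ℕ) : (Smat N).det = ((N+1).factorial : ℤ) := by
  rw [Matrix.det_of_upperTriangular
    (by intro l j h
        have h' : (j:ℕ) < (l:ℕ) := h
        simp only [Smat, Matrix.of_apply]
        rw [if_neg (by omega), if_neg (by omega)]; ring)]
  have hdiag : ∀ j : Fin (N+1), Smat N j j = ((N:ℤ)+1-(j:ℕ)) := by
    intro j
    simp only [Smat, Matrix.of_apply]
    rw [if_pos trivial, if_neg (by omega)]; ring
  rw [Finset.prod_congr rfl (fun j _ => hdiag j)]
  rw [Fin.prod_univ_eq_prod_range (fun j => ((N:ℤ)+1-(j:ℕ)))]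
  have : ∀ j ∈ Finset.range (N+1), ((N:ℤ)+1-(j:ℕ)) = ((N+1-j : ℕ) : ℤ) := by
    intro j hj; simp only [Finset.mem_range] at hj; push_cast; omega
  rw [Finset.prod_congr rfl this, ← Nat.cast_prod]
  congr 1
  have := Finset.prod_range_reflect (fun j => j + 1) (N+1)
  rw [prod_range_fact] at this
  rw [← this]
  apply Finset.prod_congr rfl
  intro j hj; simp only [Finset.mem_range] at hj; omega

theorem det_K_eq_four_pow_mul_factorial (n : ℕ) (hn : 1 ≤ n) :
    (Matrix.of fun i j : Fin n =>
      ∑ k ∈ Finset.Icc (-(n : ℤ) + 1) (n : ℤ),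
        k * intChoose (2 * ((j : ℤ) + 1) + k - 3) (((i : ℤ) + 1) - 1) *
          intChoose (n : ℤ) (((j : ℤ) + 1) + k - 1)).det
    = 4 ^ (n * (n - 1) / 2) * (n.factorial : ℤ) := by
  obtain ⟨N, rfl⟩ : ∃ N, n = N + 1 := ⟨n - 1, by omega⟩
  have hK : (Matrix.of fun i j : Fin (N+1) =>
      ∑ k ∈ Finset.Icc (-((N+1 : ℕ) : ℤ) + 1) ((N+1 : ℕ) : ℤ),
        k * intChoose (2 * ((j : ℤ) + 1) + k - 3) (((i : ℤ) + 1) - 1) *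
          intChoose ((N+1 : ℕ) : ℤ) (((j : ℤ) + 1) + k - 1)) = Amat N * Smat N := by
    ext i j
    rw [AS_entry N i j]
    have h := K_entry N i j (Nat.lt_succ_iff.mp j.isLt)
    push_cast at h ⊢
    rw [Matrix.of_apply] at *
    rw [h, mul_sub, Polynomial.coeff_sub, mul_smul_comm, mul_smul_comm,
      Polynomial.coeff_smul, Polynomial.coeff_smul, smul_eq_mul, smul_eq_mul]
  rw [hK, Matrix.det_mul, A_eq_TP, Matrix.det_mul, det_T, det_P, det_S]
  have h2 : (4:ℤ)^((N+1)*((N+1)-1)/2) = 2^(N*(N+1)) := by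
    rw [show (4:ℤ) = 2^2 by norm_num, ← pow_mul]
    congr 1
    simp only [Nat.add_sub_cancel]
    rw [Nat.mul_comm (N+1) N]
    obtain ⟨r, hr⟩ := Nat.even_mul_succ_self N
    omega
  rw [h2]
  ring
end

section
/- Let n ≥ 1 be an integer and let q, v_1, …, v_n, u_1, …, u_n be complex numbers such that q ≠ 1, the v_i are pairwise distinct, the u_j are pairwise distinct, and v_i ≠ u_j and q·v_i ≠ u_j for all 1 ≤ i, j ≤ n. Set Δ(V) = Π_{1≤i<j≤n}(v_i − v_j) and Δ(U) = Π_{1≤i<j≤n}(u_i − u_j). For an integer m, let h_m(V) be the complete homogeneous symmetric polynomial of degree m evaluated at v_1, …, v_n (with h_0(V) = 1 and h_m(V) = 0 for m < 0), and let e_m(U) be the elementary symmetric polynomial of degree m evaluated at u_1, …, u_n (with e_0(U) = 1 and e_m(U) = 0 for m < 0 or m > n). Then (−1)^{n(n−1)/2} · det( 1/((v_i − u_j)(q·v_i − u_j)) )_{1≤i,j≤n} · Π_{1≤i,j≤n}(v_i − u_j)(q·v_i − u_j) / (Δ(V)·Δ(U)) = det(P·Q), where P is the n×(2n−1) matrix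 with P_{i,j} = h_{j−i}(V) (1 ≤ i ≤ n, 1 ≤ j ≤ 2n−1) and Q is the (2n−1)×n matrix with Q_{j,k} = ((q^{j−k+1} − q^{k−1})/(q − 1)) · (−1)^{n−j+k−1} · e_{n−j+k−1}(U) (1 ≤ j ≤ 2n−1, 1 ≤ k ≤ n). -/
open Finset

/-- The complete homogeneous symmetric polynomial of degree `m`, evaluated at
`v 0, …, v (n-1)`: the sum of all monomials of total degree `m`. -/
noncomputable def hsymVal {n : ℕ} (v : Fin n → ℂ) (m : ℕ) : ℂ :=
  ∑ s : Sym (Fin n) m, ((s : Multiset (Fin n)).map v).prod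

/-- The complete homogeneous symmetric polynomial with integer degree:
`0` in negative degrees. -/
noncomputable def hsymZ {n : ℕ} (v : Fin n → ℂ) (m : ℤ) : ℂ :=
  if m < 0 then 0 else hsymVal v m.toNat

/-- The elementary symmetric polynomial of degree `m`, evaluated at
`u 0, …, u (n-1)`: the sum of all products of `m` distinct variables. -/
noncomputable def esymVal {n : ℕ} (u : Fin n → ℂ) (m : ℕ) : ℂ :=
  ∑ s ∈ Finset.univ.powersetCard m, ∏ j ∈ s, u j

/-- The elementary symmetric polynomial with integer degree: `0` in negative degrees. -/
noncomputable def esymZ {n : ℕ} (u : Fin n → ℂ) (m : ℤ) : ℂ :=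
  if m < 0 then 0 else esymVal u m.toNat

open Polynomial

namespace Lascoux
variable {n : ℕ}


lemma eval_basis (u : Fin n → ℂ) (b : Fin n) (x : ℂ) :
    (Lagrange.basis univ u b).eval x
      = (∏ j ∈ univ.erase b, (u b - u j))⁻¹ * ∏ j ∈ univ.erase b, (x - u j) := by
  rw [Lagrange.basis, eval_prod, ← prod_inv_distrib, ← prod_mul_distrib]
  refine prod_congr rfl fun j _ => ?_
  simp [Lagrange.basisDivisor]

lemma lagrange_eval (u : Fin n → ℂ) (hu : Function.Injective u) {d : ℕ} (hd : d < n) (x : ℂ) :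
    ∑ b : Fin n, (u b)^d * ((∏ j ∈ univ.erase b, (u b - u j))⁻¹
      * ∏ j ∈ univ.erase b, (x - u j)) = x^d := by
  have hcard : (univ : Finset (Fin n)).card = n := by simp
  have h := Lagrange.eq_interpolate (f := (X:ℂ[X])^d) (hu.injOn) (by
    rw [hcard, degree_X_pow]; exact_mod_cast hd)
  have := congrArg (eval x) h.symm
  rw [eval_pow, eval_X, Lagrange.interpolate_apply, eval_finset_sum] at this
  rw [← this]
  refine sum_congr rfl fun b _ => ?_
  rw [eval_mul, eval_C, eval_pow, eval_X, eval_basis]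

lemma lagrange_delta (v : Fin n → ℂ) (hv : Function.Injective v) {s : ℕ} (hs : s < n) :
    ∑ l : Fin n, (v l)^s * (∏ m ∈ univ.erase l, (v l - v m))⁻¹
      = if s = n - 1 then 1 else 0 := by
  have hcard : (univ : Finset (Fin n)).card = n := by simp
  have h := Lagrange.eq_interpolate (f := (X:ℂ[X])^s) (hv.injOn) (by
    rw [hcard, degree_X_pow]; exact_mod_cast hs)
  have hc := congrArg (fun p : ℂ[X] => p.coeff (n-1)) h
  simp only [Lagrange.interpolate_apply, eval_pow, eval_X] at hc
  rw [finset_sum_coeff, coeff_X_pow] at hc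
  have h2 : ∀ l : Fin n, (C ((v l)^s) * Lagrange.basis univ v l).coeff (n-1)
      = v l ^ s * (∏ m ∈ univ.erase l, (v l - v m))⁻¹ := ?_
  · rw [show (if s = n - 1 then (1:ℂ) else 0) = if n - 1 = s then 1 else 0 by
      simp only [eq_comm], hc]
    exact (sum_congr rfl fun l _ => h2 l).symm
  intro l
  rw [coeff_C_mul, Lagrange.basis]
  have hbd : ∏ j ∈ univ.erase l, Lagrange.basisDivisor (v l) (v j)
      = C (∏ m ∈ univ.erase l, (v l - v m))⁻¹ * ∏ j ∈ univ.erase l, (X - C (v j)) := by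
    rw [← prod_inv_distrib, map_prod, ← prod_mul_distrib]
    exact prod_congr rfl fun j _ => rfl
  rw [hbd]
  have hmono : (∏ j ∈ univ.erase l, (X - C (v j))).Monic :=
    monic_prod_of_monic _ _ fun j _ => monic_X_sub_C _
  have hdeg : (∏ j ∈ univ.erase l, (X - C (v j))).natDegree = n - 1 := by
    rw [natDegree_prod_of_monic _ _ fun j _ => monic_X_sub_C _]
    simp [card_erase_of_mem]
  rw [coeff_C_mul, ← hdeg, hmono.coeff_natDegree]
  ring

lemma esymVal_eq_zero (u : Fin n → ℂ) {m : ℕ} (hm : n < m) : esymVal u m = 0 := by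
  rw [esymVal, powersetCard_eq_empty.2 (by simpa using hm), sum_empty]

lemma hsymVal_zero (v : Fin n → ℂ) : hsymVal v 0 = 1 := by
  rw [hsymVal]
  rw [Fintype.sum_eq_single (Sym.nil : Sym (Fin n) 0) (fun μ => by
    have : μ = Sym.nil := Subsingleton.elim _ _
    simp [this])]
  simp

lemma vieta (u : Fin n → ℂ) (x : ℂ) :
    ∏ j : Fin n, (x - u j) = ∑ r ∈ range (n+1), (-1)^r * esymVal u r * x^(n-r) := by
  have hcard : (univ : Finset (Fin n)).card = n := by simp
  have hmono : (∏ j : Fin n, (X - C (u j))).Monic :=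
    monic_prod_of_monic _ _ fun j _ => monic_X_sub_C _
  have hdeg : (∏ j : Fin n, (X - C (u j))).natDegree = n := by
    rw [natDegree_prod_of_monic _ _ fun j _ => monic_X_sub_C _]; simp
  have hev : ∏ j : Fin n, (x - u j) = (∏ j : Fin n, (X - C (u j))).eval x := by
    rw [eval_prod]; simp
  rw [hev, eval_eq_sum_range]
  simp only [hdeg]
  conv_lhs => rw [← sum_range_reflect]
  refine sum_congr rfl fun r hr => ?_
  have hrn : r ≤ n := by have := mem_range.mp hr; omega
  have he : n + 1 - 1 - r = n - r := by omega
  simp only [he]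
  have hprod : (∏ j : Fin n, (X - C (u j))) = ((univ.val.map u).map (fun t => X - C t)).prod := by
    rw [Finset.prod_eq_multiset_prod, Multiset.map_map]; rfl
  have hcm : Multiset.card (univ.val.map u) = n := by simp
  have hcoeff := Multiset.prod_X_sub_C_coeff (univ.val.map u)
    (k := n - r) (by rw [hcm]; omega)
  rw [hcm] at hcoeff
  have h3 : n - (n - r) = r := by omega
  rw [h3] at hcoeff
  rw [hprod, hcoeff, Finset.esymm_map_val, ← esymVal]


lemma esymVal_zero (v : Fin n → ℂ) : esymVal v 0 = 1 := by
  simp [esymVal]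



lemma hsymVal_eq (v : Fin n → ℂ) (d : ℕ) :
    hsymVal v d = ∑ f ∈ finsuppAntidiag (univ : Finset (Fin n)) d, ∏ i : Fin n, v i ^ f i := by
  rw [hsymVal]
  refine sum_bij' (fun (μ : Sym (Fin n) d) _ => Multiset.toFinsupp (μ : Multiset (Fin n)))
    (fun f hf => ⟨Finsupp.toMultiset f, ?_⟩) (fun μ _ => ?_) (fun f hf => mem_univ _)
    (fun μ _ => ?_) (fun f hf => ?_) (fun μ _ => ?_)
  · rw [mem_finsuppAntidiag] at hf
    rw [Finsupp.card_toMultiset, Finsupp.sum, ← hf.1]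
    simp only [id_eq]
    exact sum_subset (subset_univ _) (fun x _ hx => Finsupp.notMem_support_iff.mp hx)
  · rw [mem_finsuppAntidiag]
    refine ⟨?_, subset_univ _⟩
    have hcount : univ.sum ⇑(Multiset.toFinsupp (μ : Multiset (Fin n)))
        = Multiset.card (μ : Multiset (Fin n)) := by
      show ∑ x ∈ univ, Multiset.count x (μ : Multiset (Fin n)) = _
      rw [← Multiset.toFinset_sum_count_eq (μ : Multiset (Fin n))]
      exact (sum_subset (subset_univ _) (fun x _ hx =>
        Multiset.count_eq_zero_of_notMem (by simpa using hx))).symm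
    rw [hcount]; exact μ.2
  · exact Sym.coe_injective (by simp)
  · simp
  · rw [← Finset.prod_subset (subset_univ (μ : Multiset (Fin n)).toFinset)
      (fun x _ hx => by
        simp only [Multiset.toFinsupp_apply]
        rw [Multiset.count_eq_zero_of_notMem (by simpa using hx), pow_zero])]
    rw [Finset.prod_multiset_map_count]
    exact prod_congr rfl (fun x _ => by rw [Multiset.toFinsupp_apply])

lemma geom_inv (a : ℂ) :
    (1 - PowerSeries.C a * PowerSeries.X) * PowerSeries.mk (fun k => a ^ k) = 1 := by
  ext k
  rw [sub_mul, one_mul, map_sub, mul_assoc]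
  cases k with
  | zero => simp
  | succ k =>
    rw [PowerSeries.coeff_C_mul, PowerSeries.coeff_succ_X_mul]
    simp [pow_succ, mul_comm]

lemma mk_hsym_eq_prod (v : Fin n → ℂ) :
    PowerSeries.mk (fun m => hsymVal v m)
      = ∏ l : Fin n, PowerSeries.mk (fun k => (v l) ^ k) := by
  ext d
  rw [PowerSeries.coeff_mk, PowerSeries.coeff_prod, hsymVal_eq]
  exact sum_congr rfl fun f _ => prod_congr rfl fun i _ => (PowerSeries.coeff_mk _ _).symm

lemma esym_series (v : Fin n → ℂ) :
    (∏ l : Fin n, (1 - PowerSeries.C (v l) * PowerSeries.X))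
      = PowerSeries.mk (fun r => (-1)^r * esymVal v r) := by
  have h1 : ∀ l : Fin n, (1 - PowerSeries.C (v l) * PowerSeries.X)
      = -(PowerSeries.C (v l)) * PowerSeries.X + 1 := fun l => by ring
  simp only [h1]
  rw [Finset.prod_add]
  simp only [prod_const_one, mul_one]
  have h2 : ∀ t : Finset (Fin n), ∏ i ∈ t, -(PowerSeries.C (v i)) * PowerSeries.X
      = PowerSeries.C ((-1)^t.card * ∏ i ∈ t, v i) * PowerSeries.X ^ t.card := by
    intro t
    rw [prod_mul_distrib, prod_const, map_mul, map_pow, map_neg, map_one, map_prod]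
    congr 1
    rw [prod_congr rfl (fun i (_ : i ∈ t) => (neg_eq_neg_one_mul (PowerSeries.C (v i)))),
      prod_mul_distrib, prod_const]
  simp only [h2]
  ext r
  rw [PowerSeries.coeff_mk, map_sum]
  simp_rw [PowerSeries.coeff_C_mul, PowerSeries.coeff_X_pow, mul_ite, mul_one, mul_zero]
  rw [← sum_filter]
  have hfil : univ.powerset.filter (fun x : Finset (Fin n) => r = #x) = univ.powersetCard r := by
    rw [powersetCard_eq_filter]
    exact filter_congr fun x _ => by simp [eq_comm]
  rw [hfil, esymVal, mul_sum]
  exact sum_congr rfl fun x hx => by rw [(mem_powersetCard.mp hx).2]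



lemma he_rec (v : Fin n → ℂ) (t : ℕ) :
    ∑ r ∈ range (n+1), (-1:ℂ)^r * esymVal v r * hsymZ v ((t:ℤ) - r)
      = if t = 0 then 1 else 0 := by
  have key : (PowerSeries.mk (fun r => (-1:ℂ)^r * esymVal v r))
      * PowerSeries.mk (fun m => hsymVal v m) = 1 := by
    rw [← esym_series, mk_hsym_eq_prod, ← prod_mul_distrib]
    rw [prod_congr rfl (fun l (_ : l ∈ univ) => geom_inv (v l)), prod_const_one]
  have hc := congrArg (PowerSeries.coeff (R := ℂ) t) key
  rw [PowerSeries.coeff_mul, PowerSeries.coeff_one,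
    Finset.Nat.sum_antidiagonal_eq_sum_range_succ_mk] at hc
  simp only [PowerSeries.coeff_mk] at hc
  set F : ℕ → ℂ := fun r => (-1:ℂ)^r * esymVal v r * hsymZ v ((t:ℤ) - r) with hF
  have h1 : ∑ r ∈ range (t+1), (-1:ℂ)^r * esymVal v r * hsymVal v (t - r)
      = ∑ r ∈ range (t+1), F r := by
    refine sum_congr rfl fun r hr => ?_
    have hrt : r ≤ t := by have := mem_range.mp hr; omega
    simp only [hF]
    have : hsymZ v ((t:ℤ) - r) = hsymVal v (t - r) := by
      rw [hsymZ, if_neg (by omega)]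
      congr 1
      omega
    rw [this]
  have h2 : ∑ r ∈ range (t+1), F r = ∑ r ∈ range (max t n + 2), F r := by
    refine sum_subset (by intro x hx; simp only [mem_range] at *; omega) ?_
    intro x _ hx
    have hxt : t < x := by simp only [mem_range] at *; omega
    simp only [hF]
    have : hsymZ v ((t:ℤ) - x) = 0 := by rw [hsymZ, if_pos (by omega)]
    rw [this, mul_zero]
  have h3 : ∑ r ∈ range (n+1), F r = ∑ r ∈ range (max t n + 2), F r := by
    refine sum_subset (by intro x hx; simp only [mem_range] at *; omega) ?_
    intro x _ hx
    have hxn : n < x := by simp only [mem_range] at *; omega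
    simp only [hF]; rw [esymVal_eq_zero v hxn]
    ring
  rw [h3, ← h2, ← h1, hc]

lemma sum_pow_div (v : Fin n → ℂ) (hn : 1 ≤ n) (hv : Function.Injective v) (s : ℕ) :
    ∑ l : Fin n, (v l)^s * (∏ m ∈ univ.erase l, (v l - v m))⁻¹
      = hsymZ v ((s:ℤ) - n + 1) := by
  induction s using Nat.strong_induction_on with
  | _ s IH =>
  rcases lt_or_ge s n with hsn | hsn
  · rw [lagrange_delta v hv hsn]
    rcases eq_or_ne s (n-1) with he | hne
    · rw [if_pos he, hsymZ, if_neg (by omega)]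
      have : ((s:ℤ) - n + 1).toNat = 0 := by omega
      rw [this, hsymVal_zero]
    · rw [if_neg hne, hsymZ, if_pos (by omega)]
  · -- s ≥ n
    have hS : ∑ r ∈ range (n+1), (-1:ℂ)^r * esymVal v r *
        (∑ l : Fin n, (v l)^(s-r) * (∏ m ∈ univ.erase l, (v l - v m))⁻¹) = 0 := by
      have hswap : ∑ r ∈ range (n+1), (-1:ℂ)^r * esymVal v r *
          (∑ l : Fin n, (v l)^(s-r) * (∏ m ∈ univ.erase l, (v l - v m))⁻¹)
          = ∑ l : Fin n, (∏ m ∈ univ.erase l, (v l - v m))⁻¹ *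
            ((v l)^(s-n) * ∑ r ∈ range (n+1), (-1:ℂ)^r * esymVal v r * (v l)^(n-r)) := by
        simp_rw [mul_sum]
        rw [sum_comm]
        refine sum_congr rfl fun l _ => ?_
        refine sum_congr rfl fun r hr => ?_
        have hr' : r ≤ n := by have := mem_range.mp hr; omega
        have hpow : v l ^ (s - r) = v l ^ (s-n) * v l ^ (n-r) := by
          rw [← pow_add]; congr 1; omega
        rw [hpow]; ring
      rw [hswap]
      refine sum_eq_zero fun l _ => ?_
      rw [← vieta v (v l)]
      rw [prod_eq_zero (mem_univ l) (by ring)]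
      ring
    have hrec := he_rec v (s - n + 1)
    rw [if_neg (by omega)] at hrec
    rw [Finset.sum_range_succ'] at hS hrec
    have hmatch : ∀ i ∈ range n,
        (-1:ℂ)^(i+1) * esymVal v (i+1) *
          (∑ l : Fin n, (v l)^(s-(i+1)) * (∏ m ∈ univ.erase l, (v l - v m))⁻¹)
        = (-1:ℂ)^(i+1) * esymVal v (i+1) * hsymZ v (((s - n + 1 : ℕ):ℤ) - (i+1)) := by
      intro i hi
      have hi' : i < n := mem_range.mp hi
      rw [IH (s-(i+1)) (by omega)]
      congr 2
      omega
    rw [sum_congr rfl hmatch] at hS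
    simp only [Nat.sub_zero, Nat.cast_zero, sub_zero, pow_zero, one_mul, esymVal_zero] at hS hrec
    push_cast at hS hrec
    have hgoal : ∑ l : Fin n, (v l)^s * (∏ m ∈ univ.erase l, (v l - v m))⁻¹
        = hsymZ v (((s - n : ℕ):ℤ) + 1) := by linear_combination hS - hrec
    have h0 : ((s - n : ℕ):ℤ) + 1 = (s:ℤ) - n + 1 := by omega
    rw [h0] at hgoal
    exact hgoal


lemma key_u_generic (u : Fin n → ℂ) (q : ℂ) (hq : q ≠ 1) (hu : Function.Injective u)
    {k : ℕ} (hk : k < n) (x : ℂ) (hx0 : x ≠ 0)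
    (hx1 : ∀ b, x ≠ u b) (hx2 : ∀ b, q * x ≠ u b) :
    ∑ b : Fin n, (u b ^ k * (∏ j ∈ univ.erase b, (u b - u j))⁻¹) *
      ∏ j ∈ univ.erase b, ((x - u j) * (q * x - u j))
    = ∑ r ∈ range (n+1), (-1:ℂ)^r * esymVal u r * ((q^(n-r) - q^k)/(q-1)) * x^(n + k - 1 - r) := by
  have hq1 : q - 1 ≠ 0 := sub_ne_zero.mpr hq
  set A := ∏ j : Fin n, (x - u j) with hA
  set B := ∏ j : Fin n, (q * x - u j) with hB
  have per_b : ∀ b : Fin n, (u b ^ k * (∏ j ∈ univ.erase b, (u b - u j))⁻¹) *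
      ∏ j ∈ univ.erase b, ((x - u j) * (q * x - u j))
      = ((q-1)*x)⁻¹ * (B * (u b ^ k * ((∏ j ∈ univ.erase b, (u b - u j))⁻¹ *
          ∏ j ∈ univ.erase b, (x - u j)))
        - A * (u b ^ k * ((∏ j ∈ univ.erase b, (u b - u j))⁻¹ *
          ∏ j ∈ univ.erase b, (q * x - u j)))) := by
    intro b
    have hAe : (∏ j ∈ univ.erase b, (x - u j)) * (x - u b) = A :=
      prod_erase_mul univ _ (mem_univ b)
    have hBe : (∏ j ∈ univ.erase b, (q * x - u j)) * (q * x - u b) = B :=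
      prod_erase_mul univ _ (mem_univ b)
    rw [prod_mul_distrib, ← hAe, ← hBe]
    field_simp
    ring
  rw [sum_congr rfl (fun b _ => per_b b)]
  rw [← mul_sum, sum_sub_distrib, ← mul_sum, ← mul_sum]
  rw [lagrange_eval u hu hk x, lagrange_eval u hu hk (q*x)]
  rw [hA, hB, vieta u x, vieta u (q*x)]
  rw [sum_mul, sum_mul, ← sum_sub_distrib, mul_sum]
  refine sum_congr rfl fun r hr => ?_
  have hrn : r ≤ n := by have := mem_range.mp hr; omega
  rcases Nat.eq_zero_or_pos (n + k - r) with h0 | hpos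
  · -- r = n, k = 0
    have hrn' : r = n := by omega
    have hk0 : k = 0 := by omega
    subst hrn' hk0
    simp [mul_pow]
  · have hexp : n + k - 1 - r = (n + k - r) - 1 := by omega
    have hxe : x^(n - r + k) = x * x^(n + k - 1 - r) := by
      rw [← pow_succ']
      congr 1
      omega
    have hxx2 : x ^ (n - r) * x ^ k = x * x ^ (k + n - r - 1) := by
      rw [← pow_add, show n - r + k = (k + n - r - 1) + 1 by omega, pow_succ']
    rw [mul_pow, hexp]
    field_simp
    ring_nf
    linear_combination (esymVal u r * (q^(n-r) - q^k)) * hxx2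

lemma key_u (u : Fin n → ℂ) (q : ℂ) (hq : q ≠ 1) (hu : Function.Injective u)
    (hu0 : ∀ b, u b ≠ 0 ∨ q ≠ 0) {k : ℕ} (hk : k < n) (x : ℂ)
    (hx1 : ∀ b, x ≠ u b) (hx2 : ∀ b, q * x ≠ u b) :
    ∑ b : Fin n, (u b ^ k * (∏ j ∈ univ.erase b, (u b - u j))⁻¹) *
      ∏ j ∈ univ.erase b, ((x - u j) * (q * x - u j))
    = ∑ r ∈ range (n+1), (-1:ℂ)^r * esymVal u r * ((q^(n-r) - q^k)/(q-1))
        * x^(n + k - 1 - r) := by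
  set P1 : ℂ[X] := ∑ b : Fin n, C (u b ^ k * (∏ j ∈ univ.erase b, (u b - u j))⁻¹) *
      ∏ j ∈ univ.erase b, ((X - C (u j)) * (C q * X - C (u j))) with hP1
  set P2 : ℂ[X] := ∑ r ∈ range (n+1),
      C ((-1:ℂ)^r * esymVal u r * ((q^(n-r) - q^k)/(q-1))) * X^(n + k - 1 - r) with hP2
  have hev1 : ∀ y : ℂ, P1.eval y = ∑ b : Fin n,
      (u b ^ k * (∏ j ∈ univ.erase b, (u b - u j))⁻¹) *
      ∏ j ∈ univ.erase b, ((y - u j) * (q * y - u j)) := by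
    intro y
    rw [hP1, eval_finset_sum]
    refine sum_congr rfl fun b _ => ?_
    rw [eval_mul, eval_C, eval_prod]
    congr 1
    exact prod_congr rfl fun j _ => by simp
  have hev2 : ∀ y : ℂ, P2.eval y = ∑ r ∈ range (n+1),
      (-1:ℂ)^r * esymVal u r * ((q^(n-r) - q^k)/(q-1)) * y^(n + k - 1 - r) := by
    intro y
    rw [hP2, eval_finset_sum]
    exact sum_congr rfl fun r _ => by simp
  have hPP : P1 = P2 := by
    apply eq_of_infinite_eval_eq
    have hfin : (({0} ∪ Set.range u ∪ Set.range (fun b => u b / q)) : Set ℂ).Finite :=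
      ((Set.finite_singleton 0).union (Set.finite_range u)).union (Set.finite_range _)
    apply Set.Infinite.mono _ hfin.infinite_compl
    intro y hy
    simp only [Set.mem_compl_iff, Set.mem_union, Set.mem_singleton_iff, Set.mem_range,
      not_or, not_exists] at hy
    obtain ⟨⟨hy0, hyu⟩, hyq⟩ := hy
    have h1 : ∀ b, y ≠ u b := fun b h => hyu b h.symm
    have h2 : ∀ b, q * y ≠ u b := by
      intro b heq
      rcases eq_or_ne q 0 with hq0 | hq0
      · rcases hu0 b with hub | hqq
        · rw [hq0, zero_mul] at heq; exact hub heq.symm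
        · exact hqq hq0
      · exact hyq b (by field_simp at heq ⊢; linear_combination -heq)
    show y ∈ {y | P1.eval y = P2.eval y}
    simp only [Set.mem_setOf_eq]
    rw [hev1, hev2]
    exact key_u_generic u q hq hu hk y hy0 h1 h2
  rw [← hev1 x, ← hev2 x, hPP]


lemma prod_pairs_lt (f : Fin n → Fin n → ℂ) :
    ∏ p ∈ univ.filter (fun p : Fin n × Fin n => p.1 < p.2), f p.1 p.2
      = ∏ i : Fin n, ∏ j ∈ Ioi i, f i j := by
  rw [← Finset.univ_product_univ, prod_filter, Finset.prod_product]
  refine prod_congr rfl fun i _ => ?_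
  rw [← prod_filter]
  refine prod_congr ?_ (fun _ _ => rfl)
  ext j; simp [mem_Ioi]

lemma card_pairs_lt :
    (univ.filter (fun p : Fin n × Fin n => p.1 < p.2)).card = n * (n-1) / 2 := by
  rw [Finset.card_filter, ← Finset.univ_product_univ, Finset.sum_product]
  have h1 : ∀ i : Fin n, (∑ j : Fin n, if i < j then 1 else 0) = n - 1 - (i:ℕ) := by
    intro i
    rw [← Finset.card_filter]
    have : univ.filter (fun j => i < j) = Ioi i := by ext j; simp [mem_Ioi]
    rw [this, Fin.card_Ioi]
  rw [sum_congr rfl fun i _ => h1 i]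
  rw [Fin.sum_univ_eq_sum_range (fun i => n - 1 - i) n]
  rw [Finset.sum_range_reflect (fun i => i) n, Finset.sum_range_id]

lemma prod_gt_eq (g : Fin n → Fin n → ℂ) :
    ∏ p ∈ univ.filter (fun p : Fin n × Fin n => p.2 < p.1), g p.1 p.2
      = ∏ p ∈ univ.filter (fun p : Fin n × Fin n => p.1 < p.2), g p.2 p.1 := by
  refine prod_nbij' (fun p => (p.2, p.1)) (fun p => (p.2, p.1))
    (fun p hp => ?_) (fun p hp => ?_) (fun p _ => rfl) (fun p _ => rfl) (fun p _ => rfl)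
  · simp only [mem_filter, mem_univ, true_and] at hp ⊢; exact hp
  · simp only [mem_filter, mem_univ, true_and] at hp ⊢; exact hp

lemma prod_erase_pairs (g : Fin n → Fin n → ℂ) :
    ∏ l : Fin n, ∏ m ∈ univ.erase l, g l m
      = (∏ p ∈ univ.filter (fun p : Fin n × Fin n => p.1 < p.2), g p.1 p.2) *
        (∏ p ∈ univ.filter (fun p : Fin n × Fin n => p.1 < p.2), g p.2 p.1) := by
  have h1 : ∀ l : Fin n, univ.erase l = univ.filter (fun m => l ≠ m) := by
    intro l; ext m; simp [mem_erase, ne_comm]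
  rw [prod_congr rfl (fun l (_ : l ∈ univ) => by rw [h1 l])]
  have h2 : ∏ l : Fin n, ∏ m ∈ univ.filter (fun m => l ≠ m), g l m
      = ∏ p ∈ univ.filter (fun p : Fin n × Fin n => p.1 ≠ p.2), g p.1 p.2 := by
    rw [← Finset.univ_product_univ, prod_filter, Finset.prod_product]
    exact prod_congr rfl fun i _ => (prod_filter _ _)
  rw [h2]
  have h3 : (univ.filter (fun p : Fin n × Fin n => p.1 ≠ p.2))
      = (univ.filter (fun p : Fin n × Fin n => p.1 < p.2)) ∪
        (univ.filter (fun p : Fin n × Fin n => p.2 < p.1)) := by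
    rw [← filter_or]
    exact filter_congr fun p _ => by
      constructor
      · intro h; exact lt_or_gt_of_ne h
      · intro h; exact h.elim (fun h' => ne_of_lt h') (fun h' => (ne_of_lt h').symm)
  rw [h3, prod_union ?hdisj, prod_gt_eq]
  case hdisj =>
    rw [disjoint_filter]
    intro p _ h1 h2
    exact absurd h2 (not_lt_of_gt h1)

lemma det_rev_vandermonde (x : Fin n → ℂ) :
    (Matrix.of fun i l : Fin n => x l ^ (n - 1 - (i:ℕ))).det
      = ∏ p ∈ univ.filter (fun p : Fin n × Fin n => p.1 < p.2), (x p.1 - x p.2) := by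
  have hM : (Matrix.of fun i l : Fin n => x l ^ (n - 1 - (i:ℕ)))
      = Matrix.transpose ((Matrix.vandermonde (x ∘ Fin.rev)).submatrix Fin.revPerm Fin.revPerm) := by
    ext i l
    simp only [Matrix.transpose_apply, Matrix.submatrix_apply, Matrix.vandermonde,
      Matrix.of_apply, Function.comp_apply, Fin.revPerm_apply, Fin.rev_rev]
    rw [Fin.val_rev]
    congr 1
    omega
  rw [hM, Matrix.det_transpose, Matrix.det_submatrix_equiv_self, Matrix.det_vandermonde]
  simp only [Function.comp_apply]
  rw [← prod_pairs_lt (fun i j => x (Fin.rev j) - x (Fin.rev i))]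
  refine prod_nbij' (fun p => (p.2.rev, p.1.rev)) (fun p => (p.2.rev, p.1.rev)) ?_ ?_ ?_ ?_ ?_
  · intro p hp
    simp only [mem_filter, mem_univ, true_and] at hp ⊢
    exact Fin.rev_lt_rev.mpr hp
  · intro p hp
    simp only [mem_filter, mem_univ, true_and] at hp ⊢
    exact Fin.rev_lt_rev.mpr hp
  · intro p _; simp [Fin.rev_rev]
  · intro p _; simp [Fin.rev_rev]
  · intro p _; rfl


lemma entry (hn : 1 ≤ n) (q : ℂ) (hq : q ≠ 1) (v u : Fin n → ℂ)
    (hvI : Function.Injective v) (huI : Function.Injective u)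
    (hu0 : ∀ b, u b ≠ 0 ∨ q ≠ 0)
    (hvu : ∀ i j : Fin n, v i ≠ u j) (hqvu : ∀ i j : Fin n, q * v i ≠ u j)
    (i k : Fin n) :
    ∑ j : Fin (2 * n - 1), hsymZ v (((j : ℤ) + 1) - ((i : ℤ) + 1)) *
      (((q ^ ((((j : ℤ) + 1) - ((k : ℤ) + 1)) + 1) - q ^ (((k : ℤ) + 1) - 1)) / (q - 1)) *
        (-1 : ℂ) ^ ((n : ℤ) - ((j : ℤ) + 1) + ((k : ℤ) + 1) - 1) *
        esymZ u ((n : ℤ) - ((j : ℤ) + 1) + ((k : ℤ) + 1) - 1))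
    = ∑ l : Fin n, (v l ^ (n - 1 - (i:ℕ)) * (∏ m ∈ univ.erase l, (v l - v m))⁻¹) *
        (∑ b : Fin n, (∏ j ∈ univ.erase b, ((v l - u j) * (q * v l - u j))) *
          (u b ^ (k:ℕ) * (∏ j ∈ univ.erase b, (u b - u j))⁻¹)) := by
  classical
  set G : ℤ → ℂ := fun r =>
    ((q ^ ((n:ℤ) - r) - q ^ ((k:ℕ):ℤ)) / (q - 1)) * (-1:ℂ) ^ r * esymZ u r *
      hsymZ v ((n:ℤ) - 1 + (k:ℕ) - (i:ℕ) - r) with hG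
  have hkn : (k:ℕ) < n := k.2
  have hin : (i:ℕ) < n := i.2
  -- vanishing lemmas
  have hG0 : ∀ r : ℤ, r < 0 → G r = 0 := by
    intro r hr; simp only [hG, esymZ, if_pos hr]; ring
  have hGn : ∀ r : ℤ, (n:ℤ) < r → G r = 0 := by
    intro r hr
    have : esymZ u r = 0 := by
      rw [esymZ, if_neg (by omega), esymVal_eq_zero u (m := r.toNat) (by omega)]
    simp only [hG, this]; ring
  have hGtop : (k:ℕ) = 0 → G (n:ℤ) = 0 := by
    intro hk0
    simp only [hG, hk0, sub_self, Nat.cast_zero, zpow_zero]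
    ring
  -- step C : LHS = ∑ r ∈ range (n+1), G r
  have hC : ∑ j : Fin (2 * n - 1), hsymZ v (((j : ℤ) + 1) - ((i : ℤ) + 1)) *
      (((q ^ ((((j : ℤ) + 1) - ((k : ℤ) + 1)) + 1) - q ^ (((k : ℤ) + 1) - 1)) / (q - 1)) *
        (-1 : ℂ) ^ ((n : ℤ) - ((j : ℤ) + 1) + ((k : ℤ) + 1) - 1) *
        esymZ u ((n : ℤ) - ((j : ℤ) + 1) + ((k : ℤ) + 1) - 1))
      = ∑ r ∈ Finset.range (n+1), G (r:ℤ) := by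
    have hf : ∀ j : Fin (2*n-1), hsymZ v (((j : ℤ) + 1) - ((i : ℤ) + 1)) *
      (((q ^ ((((j : ℤ) + 1) - ((k : ℤ) + 1)) + 1) - q ^ (((k : ℤ) + 1) - 1)) / (q - 1)) *
        (-1 : ℂ) ^ ((n : ℤ) - ((j : ℤ) + 1) + ((k : ℤ) + 1) - 1) *
        esymZ u ((n : ℤ) - ((j : ℤ) + 1) + ((k : ℤ) + 1) - 1))
        = G ((n:ℤ) - 1 + (k:ℕ) - (j:ℕ)) := by
      intro j
      rw [show (((j:ℤ) + 1) - ((k:ℤ)+1)) + 1 = (n:ℤ) - ((n:ℤ) - 1 + ((k:ℕ):ℤ) - ((j:ℕ):ℤ)) by push_cast; ring,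
        show ((k:ℤ)+1) - 1 = ((k:ℕ):ℤ) by push_cast; ring,
        show (n:ℤ) - ((j:ℤ)+1) + (((k:ℕ):ℤ)+1) - 1 = (n:ℤ) - 1 + ((k:ℕ):ℤ) - ((j:ℕ):ℤ) by push_cast; ring,
        show ((j:ℤ)+1) - ((i:ℤ)+1) = (n:ℤ) - 1 + ((k:ℕ):ℤ) - ((i:ℕ):ℤ) - ((n:ℤ) - 1 + ((k:ℕ):ℤ) - ((j:ℕ):ℤ)) by push_cast; ring]
      simp only [hG]
      ring
    rw [sum_congr rfl (fun j _ => hf j)]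
    rw [Fin.sum_univ_eq_sum_range (fun jn => G ((n:ℤ) - 1 + (k:ℕ) - jn))]
    rw [← Finset.sum_image (f := G)
      (g := fun jn : ℕ => (n:ℤ) - 1 + ((k:ℕ):ℤ) - (jn:ℤ)) (s := range (2*n-1))
      (fun x _ y _ hxy => by simp only [] at hxy; omega)]
    rw [← Finset.sum_image (f := G) (g := fun r : ℕ => (r:ℤ)) (s := range (n+1))
      (fun x _ y _ hxy => by simp only [] at hxy; omega)]
    have h1 : ∑ r ∈ (range (2*n-1)).image (fun jn : ℕ => (n:ℤ) - 1 + (k:ℕ) - jn), G r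
        = ∑ r ∈ Finset.Icc (-(n:ℤ)) (2*n), G r := by
      refine sum_subset ?_ ?_
      · intro r hr
        simp only [mem_image, mem_range] at hr
        obtain ⟨jn, hjn, rfl⟩ := hr
        rw [Finset.mem_Icc]; omega
      · intro r hr hrim
        simp only [mem_image, mem_range, Finset.mem_Icc] at hr hrim
        rcases lt_or_ge r 0 with h | h
        · exact hG0 r h
        rcases lt_or_ge (n:ℤ) r with h2 | h2
        · exact hGn r h2
        have hrn : r = (n:ℤ) ∧ (k:ℕ) = 0 := by
          by_contra hcon
          exact hrim ⟨n + (k:ℕ) - 1 - r.toNat, by omega, by omega⟩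
        rw [hrn.1]; exact hGtop hrn.2
    have h2 : ∑ r ∈ (range (n+1)).image (fun r : ℕ => (r:ℤ)), G r
        = ∑ r ∈ Finset.Icc (-(n:ℤ)) (2*n), G r := by
      refine sum_subset ?_ ?_
      · intro r hr
        simp only [mem_image, mem_range] at hr
        obtain ⟨jn, hjn, rfl⟩ := hr
        rw [Finset.mem_Icc]; omega
      · intro r hr hrim
        simp only [mem_image, mem_range, Finset.mem_Icc] at hr hrim
        rcases lt_or_ge r 0 with h | h
        · exact hG0 r h
        have h2 : (n:ℤ) < r := by
          by_contra hcon
          exact hrim ⟨r.toNat, by omega, by omega⟩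
        exact hGn r h2
    rw [h1, ← h2]
  rw [hC]
  -- step A+B : RHS
  have hA : ∀ l : Fin n,
      (∑ b : Fin n, (∏ j ∈ univ.erase b, ((v l - u j) * (q * v l - u j))) *
          (u b ^ (k:ℕ) * (∏ j ∈ univ.erase b, (u b - u j))⁻¹))
      = ∑ r ∈ range (n+1), (-1:ℂ)^r * esymVal u r * ((q^(n-r) - q^(k:ℕ))/(q-1))
          * (v l)^(n + (k:ℕ) - 1 - r) := by
    intro l
    rw [← key_u u q hq huI hu0 hkn (v l) (fun b => hvu l b) (fun b => hqvu l b)]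
    exact sum_congr rfl fun b _ => by ring
  rw [sum_congr rfl (fun l (_ : l ∈ univ) => by rw [hA l])]
  -- swap sums
  simp_rw [mul_sum]
  rw [sum_comm]
  refine sum_congr rfl fun r hr => ?_
  have hrn : r ≤ n := by have := mem_range.mp hr; omega
  have hstep : ∀ l : Fin n, (v l ^ (n - 1 - (i:ℕ)) * (∏ m ∈ univ.erase l, (v l - v m))⁻¹) *
      ((-1:ℂ)^r * esymVal u r * ((q^(n-r) - q^(k:ℕ))/(q-1)) * (v l)^(n + (k:ℕ) - 1 - r))
      = ((-1:ℂ)^r * esymVal u r * ((q^(n-r) - q^(k:ℕ))/(q-1))) *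
        ((v l)^((n - 1 - (i:ℕ)) + (n + (k:ℕ) - 1 - r)) * (∏ m ∈ univ.erase l, (v l - v m))⁻¹) := by
    intro l
    rw [pow_add]
    ring
  rw [sum_congr rfl (fun l (_ : l ∈ univ) => hstep l), ← mul_sum,
    sum_pow_div v hn hvI ((n - 1 - (i:ℕ)) + (n + (k:ℕ) - 1 - r))]
  by_cases hcon : r = n ∧ (k:ℕ) = 0
  · rw [hcon.1, hcon.2]
    rw [hGtop hcon.2]
    simp
  · have harg : (((n - 1 - (i:ℕ)) + (n + (k:ℕ) - 1 - r) : ℕ) : ℤ) - n + 1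
        = (n:ℤ) - 1 + ((k:ℕ):ℤ) - ((i:ℕ):ℤ) - ((r:ℕ):ℤ) := by
      have := not_and_or.mp hcon
      omega
    rw [harg]
    simp only [hG]
    rw [show (n:ℤ) - (r:ℤ) = ((n - r : ℕ) : ℤ) by omega, zpow_natCast, zpow_natCast,
      zpow_natCast]
    rw [esymZ, if_neg (by omega), Int.toNat_natCast]
    ring


end Lascoux

open Lascoux in
theorem lascoux_formula (n : ℕ) (hn : 1 ≤ n) (q : ℂ) (hq : q ≠ 1)
    (v u : Fin n → ℂ)
    (hv : ∀ i j : Fin n, i ≠ j → v i ≠ v j)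
    (hu : ∀ i j : Fin n, i ≠ j → u i ≠ u j)
    (hvu : ∀ i j : Fin n, v i ≠ u j)
    (hqvu : ∀ i j : Fin n, q * v i ≠ u j) :
    (-1 : ℂ) ^ (n * (n - 1) / 2) *
      (Matrix.of fun i j : Fin n => 1 / ((v i - u j) * (q * v i - u j))).det *
      (∏ i : Fin n, ∏ j : Fin n, (v i - u j) * (q * v i - u j)) /
      ((∏ p ∈ Finset.univ.filter (fun p : Fin n × Fin n => p.1 < p.2), (v p.1 - v p.2)) *
       (∏ p ∈ Finset.univ.filter (fun p : Fin n × Fin n => p.1 < p.2), (u p.1 - u p.2))) =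
    ((Matrix.of fun (i : Fin n) (j : Fin (2 * n - 1)) =>
        hsymZ v (((j : ℤ) + 1) - ((i : ℤ) + 1))) *
     (Matrix.of fun (j : Fin (2 * n - 1)) (k : Fin n) =>
        ((q ^ ((((j : ℤ) + 1) - ((k : ℤ) + 1)) + 1) - q ^ (((k : ℤ) + 1) - 1)) / (q - 1)) *
          (-1 : ℂ) ^ ((n : ℤ) - ((j : ℤ) + 1) + ((k : ℤ) + 1) - 1) *
          esymZ u ((n : ℤ) - ((j : ℤ) + 1) + ((k : ℤ) + 1) - 1))).det := by
  classical
  have hvI : Function.Injective v := fun a b hab => by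
    by_contra hne; exact hv a b hne hab
  have huI : Function.Injective u := fun a b hab => by
    by_contra hne; exact hu a b hne hab
  have hu0 : ∀ b, u b ≠ 0 ∨ q ≠ 0 := by
    intro b
    rcases eq_or_ne q 0 with hq0 | hq0
    · exact Or.inl fun h0 => hqvu ⟨0, hn⟩ b (by rw [hq0, h0, zero_mul])
    · exact Or.inr hq0
  set N := n * (n - 1) / 2 with hN
  set DV := ∏ p ∈ Finset.univ.filter (fun p : Fin n × Fin n => p.1 < p.2), (v p.1 - v p.2) with hDV
  set DU := ∏ p ∈ Finset.univ.filter (fun p : Fin n × Fin n => p.1 < p.2), (u p.1 - u p.2) with hDU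
  have hDVne : DV ≠ 0 := by
    rw [hDV]
    refine prod_ne_zero_iff.mpr fun p hp => ?_
    exact sub_ne_zero.mpr (hv _ _ (ne_of_lt (mem_filter.mp hp).2))
  have hDUne : DU ≠ 0 := by
    rw [hDU]
    refine prod_ne_zero_iff.mpr fun p hp => ?_
    exact sub_ne_zero.mpr (hu _ _ (ne_of_lt (mem_filter.mp hp).2))
  set XM : Matrix (Fin n) (Fin n) ℂ :=
    Matrix.of (fun i l => v l ^ (n - 1 - (i:ℕ)) * (∏ m ∈ univ.erase l, (v l - v m))⁻¹) with hXM
  set WM : Matrix (Fin n) (Fin n) ℂ :=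
    Matrix.of (fun l b => ∏ j ∈ univ.erase b, ((v l - u j) * (q * v l - u j))) with hWM
  set TM : Matrix (Fin n) (Fin n) ℂ :=
    Matrix.of (fun b k => u b ^ (k:ℕ) * (∏ j ∈ univ.erase b, (u b - u j))⁻¹) with hTM
  set M : Matrix (Fin n) (Fin n) ℂ :=
    Matrix.of (fun i j => 1 / ((v i - u j) * (q * v i - u j))) with hM
  have hPQ : (Matrix.of fun (i : Fin n) (j : Fin (2 * n - 1)) =>
        hsymZ v (((j : ℤ) + 1) - ((i : ℤ) + 1))) *
     (Matrix.of fun (j : Fin (2 * n - 1)) (k : Fin n) =>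
        ((q ^ ((((j : ℤ) + 1) - ((k : ℤ) + 1)) + 1) - q ^ (((k : ℤ) + 1) - 1)) / (q - 1)) *
          (-1 : ℂ) ^ ((n : ℤ) - ((j : ℤ) + 1) + ((k : ℤ) + 1) - 1) *
          esymZ u ((n : ℤ) - ((j : ℤ) + 1) + ((k : ℤ) + 1) - 1)) = XM * (WM * TM) := by
    ext i k
    simp only [Matrix.mul_apply, Matrix.of_apply, hXM, hWM, hTM]
    rw [entry hn q hq v u hvI huI hu0 hvu hqvu i k]
  have hdXM : XM.det = DV * (∏ l, (∏ m ∈ univ.erase l, (v l - v m))⁻¹) := by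
    have h : XM = (Matrix.of fun i l : Fin n => v l ^ (n - 1 - (i:ℕ))) *
        Matrix.diagonal (fun l => (∏ m ∈ univ.erase l, (v l - v m))⁻¹) := by
      ext i l
      rw [Matrix.mul_diagonal]
      rfl
    rw [h, Matrix.det_mul, Matrix.det_diagonal, det_rev_vandermonde, ← hDV]
  have hdTM : TM.det = (∏ b, (∏ j ∈ univ.erase b, (u b - u j))⁻¹) *
      ∏ i : Fin n, ∏ j ∈ Ioi i, (u j - u i) := by
    have h : TM = Matrix.diagonal (fun b => (∏ j ∈ univ.erase b, (u b - u j))⁻¹) *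
        Matrix.vandermonde u := by
      ext b k
      rw [Matrix.diagonal_mul]
      simp only [Matrix.of_apply, Matrix.vandermonde_apply, hTM]
      ring
    rw [h, Matrix.det_mul, Matrix.det_diagonal, Matrix.det_vandermonde]
  have hdWM : WM.det = (∏ l, ∏ j : Fin n, ((v l - u j) * (q * v l - u j))) * M.det := by
    have h : WM = Matrix.diagonal (fun l => ∏ j : Fin n, ((v l - u j) * (q * v l - u j))) *
        M := by
      ext l b
      rw [Matrix.diagonal_mul]
      simp only [Matrix.of_apply, hWM, hM]
      have hfac : (v l - u b) * (q * v l - u b) ≠ 0 :=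
        mul_ne_zero (sub_ne_zero.mpr (hvu l b)) (sub_ne_zero.mpr (hqvu l b))
      rw [← prod_erase_mul univ (fun j => (v l - u j) * (q * v l - u j)) (mem_univ b),
        one_div, mul_inv_cancel_right₀ hfac]
    rw [h, Matrix.det_mul, Matrix.det_diagonal]
  have hflip : ∀ f : Fin n → ℂ,
      ∏ p ∈ Finset.univ.filter (fun p : Fin n × Fin n => p.1 < p.2), (f p.2 - f p.1)
      = (-1:ℂ)^N * ∏ p ∈ Finset.univ.filter (fun p : Fin n × Fin n => p.1 < p.2), (f p.1 - f p.2) := by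
    intro f
    rw [prod_congr rfl (fun (p : Fin n × Fin n) (_ : p ∈ Finset.univ.filter
        (fun p : Fin n × Fin n => p.1 < p.2)) =>
      (show f p.2 - f p.1 = (-1) * (f p.1 - f p.2) by ring)), prod_mul_distrib, prod_const,
      card_pairs_lt]
  have hprodc : (∏ l : Fin n, ∏ m ∈ univ.erase l, (v l - v m)) = DV * ((-1:ℂ)^N * DV) := by
    rw [prod_erase_pairs (fun l m => v l - v m), hflip v, ← hDV]
  have hprodd : (∏ b : Fin n, ∏ j ∈ univ.erase b, (u b - u j)) = DU * ((-1:ℂ)^N * DU) := by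
    rw [prod_erase_pairs (fun l m => u l - u m), hflip u, ← hDU]
  have hvandU : (∏ i : Fin n, ∏ j ∈ Ioi i, (u j - u i)) = (-1:ℂ)^N * DU := by
    rw [← prod_pairs_lt (fun i j => u j - u i), hflip u, ← hDU]
  have hs : (-1:ℂ)^N * (-1:ℂ)^N = 1 := by
    rw [← pow_add]
    exact Even.neg_one_pow ⟨N, rfl⟩
  have hsne : (-1:ℂ)^N ≠ 0 := pow_ne_zero N (by norm_num)
  rw [hPQ, Matrix.det_mul, Matrix.det_mul, hdXM, hdWM, hdTM, hvandU,
    prod_inv_distrib, prod_inv_distrib, hprodc, hprodd]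
  set PD := ∏ l : Fin n, ∏ j : Fin n, (v l - u j) * (q * v l - u j) with hPD
  set md := M.det with hmd
  set s1 := (-1:ℂ)^N with hs1
  field_simp
  ring_nf
  rw [sq, hs, one_mul]
end

section
/- Let n ≥ 1 be an integer and let q, ρ, τ be complex numbers with q ∉ {0, 1, −1}, 1 + ρq ≠ 0 and τ + q ≠ 0. Define the n×n matrices M and K by M_{i,j} = Σ_{k=1}^{2n−1} (−1)^{k+1} · (q^{k−2j+2} − q^{2j−k−2})/(q − q^{−1}) · C(n + k − i − 1, k − i) · [ C(n−2, k−j−1) + ((ρ+q)/(1+ρq) + (1+τq)/(τ+q)) · C(n−2, k−j) + ((ρ+q)(1+τq)/((1+ρq)(τ+q))) · C(n−2, k−j+1) ] and K_{i,j} = Σ_{k = −n+1}^{n} (−1)^{k+1} · (q^k − q^{−k})/(q − q^{−1}) · C(2j + k − 3, i − 1) · [ C(n−2, k+j−3) + ((ρ+q)/(1+ρq) + (1+τq)/(τ+q)) · C(n−2, k+j−2) + ((ρ+q)(1+τq)/((1+ρq)(τ+q))) · C(n−2, k+j−1) ]. Then det(M) = det(K). -/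
open Finset

namespace DetMK

lemma ic_neg {a b : ℤ} (h : b < 0) : intChoose a b = 0 := by
  unfold intChoose
  rw [if_neg (by omega), if_neg (by omega)]

lemma ic_big {a b : ℤ} (h1 : 0 < b) (h2 : a < b) : intChoose a b = 0 := by
  unfold intChoose
  rw [if_neg (by omega), if_neg (by omega)]

def J (t : ℕ) (b : ℤ) : ℤ := if 0 ≤ b then ((t + b.toNat).choose t : ℤ) else 0

lemma J_neg {t : ℕ} {b : ℤ} (h : b < 0) : J t b = 0 := by
  unfold J; rw [if_neg (by omega)]

lemma J_pascal (t : ℕ) (b : ℤ) : J (t+1) b = J (t+1) (b-1) + J t b := by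
  rcases lt_trichotomy b 0 with h | h | h
  · rw [J_neg h, J_neg (by omega), J_neg h]; ring
  · subst h
    unfold J
    rw [if_pos le_rfl, if_neg (by omega), if_pos le_rfl]
    simp
  · obtain ⟨m, rfl⟩ : ∃ m : ℕ, b = (m : ℤ) + 1 := ⟨(b-1).toNat, by omega⟩
    unfold J
    rw [if_pos (by omega), if_pos (by omega), if_pos (by omega)]
    rw [show ((m:ℤ)+1).toNat = m + 1 from by omega, show ((m:ℤ)+1-1).toNat = m from by omega]
    rw [show t + 1 + (m+1) = (t + m + 1) + 1 from by omega,
        Nat.choose_succ_succ (t + m + 1) t,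
        show t + 1 + m = t + m + 1 from by omega,
        show t + (m+1) = t + m + 1 from by omega]
    push_cast
    ring

lemma alt (r : ℕ) (g : ℕ → ℤ) :
    ∑ m ∈ range (r+2), (-1:ℤ)^m * ((r+1).choose m : ℤ) * g m
      = ∑ m ∈ range (r+1), (-1:ℤ)^m * (r.choose m : ℤ) * g m
        - ∑ m ∈ range (r+1), (-1:ℤ)^m * (r.choose m : ℤ) * g (m+1) := by
  rw [Finset.sum_range_succ' (fun m => (-1:ℤ)^m * ((r+1).choose m : ℤ) * g m) (r+1)]
  have e1 : ∀ m ∈ range (r+1), (-1:ℤ)^(m+1) * (((r+1)).choose (m+1) : ℤ) * g (m+1)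
      = (-((-1:ℤ)^m * (r.choose m : ℤ) * g (m+1)))
        + (-1:ℤ)^(m+1) * (r.choose (m+1) : ℤ) * g (m+1) := by
    intro m _
    rw [Nat.choose_succ_succ]
    push_cast
    ring
  rw [Finset.sum_congr rfl e1, Finset.sum_add_distrib, Finset.sum_neg_distrib]
  have h2 : ∑ m ∈ range (r+1), (-1:ℤ)^(m+1) * (r.choose (m+1) : ℤ) * g (m+1)
        + (-1:ℤ)^0 * ((r+1).choose 0 : ℤ) * g 0
      = ∑ m ∈ range (r+2), (-1:ℤ)^m * (r.choose m : ℤ) * g m := by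
    rw [Finset.sum_range_succ' (fun m => (-1:ℤ)^m * (r.choose m : ℤ) * g m) (r+1)]
    norm_num
  have h3 : ∑ m ∈ range (r+2), (-1:ℤ)^m * (r.choose m : ℤ) * g m
      = ∑ m ∈ range (r+1), (-1:ℤ)^m * (r.choose m : ℤ) * g m := by
    rw [Finset.sum_range_succ]
    simp
  linarith [h2, h3]


lemma vand : ∀ r : ℕ, ∀ t : ℕ, r ≤ t → ∀ K : ℤ,
    ∑ m ∈ range (r+1), (-1:ℤ)^m * (r.choose m : ℤ) * J t (K - (m:ℤ)) = J (t - r) K := by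
  intro r
  induction r with
  | zero => intro t _ K; simp
  | succ r ih =>
      intro t h K
      rw [show r + 1 + 1 = r + 2 from rfl, alt r (fun m => J t (K - (m:ℤ)))]
      have e : ∀ m ∈ range (r+1), (-1:ℤ)^m * (r.choose m : ℤ) * J t (K - ((m:ℤ)+1))
          = (-1:ℤ)^m * (r.choose m : ℤ) * J t ((K-1) - (m:ℤ)) := by
        intro m _
        rw [show K - ((m:ℤ)+1) = (K-1) - (m:ℤ) from by ring]
      simp only [Nat.cast_add, Nat.cast_one] at *
      rw [Finset.sum_congr rfl e, ih t (by omega) K, ih t (by omega) (K-1)]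
      rw [show t - r = (t - (r+1)) + 1 from by omega, J_pascal (t - (r+1)) K]
      ring

lemma intChoose_shift (t : ℕ) (b : ℤ) : intChoose ((t:ℤ) + b) b = J t b := by
  unfold intChoose J
  rcases lt_trichotomy b 0 with h | h | h
  · rw [if_neg (by omega), if_neg (by omega), if_neg (by omega)]
  · subst h
    rw [if_pos rfl, if_pos le_rfl]
    simp
  · rw [if_neg (by omega), if_pos ⟨h, by omega⟩, if_pos (by omega)]
    rw [show ((t:ℤ) + b).toNat = t + b.toNat from by omega]
    have := Nat.choose_symm (Nat.le_add_left b.toNat t)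
    simp only [Nat.add_sub_cancel] at this
    exact_mod_cast this.symm

lemma ic_eq_J (i0 : ℕ) (K : ℤ) (h : 0 ≤ (i0:ℤ) + K) : intChoose ((i0:ℤ) + K) (i0:ℤ) = J i0 K := by
  rcases Nat.eq_zero_or_pos i0 with h0 | h0
  · subst h0
    unfold intChoose J
    rw [if_pos (by norm_num), if_pos (by omega)]
    simp
  · unfold intChoose J
    rcases le_or_gt 0 K with hK | hK
    · rw [if_neg (by omega), if_pos ⟨by omega, by omega⟩, if_pos hK]
      rw [show ((i0:ℤ) + K).toNat = i0 + K.toNat from by omega,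
          show ((i0:ℕ):ℤ).toNat = i0 from by omega]
    · rw [if_neg (by omega), if_neg (by omega), if_neg (by omega)]

def pZ (n i l : ℕ) : ℤ := if i ≤ l then (-1:ℤ)^(l-i) * ((n-1-i).choose (l-i) : ℤ) else 0

lemma inner_int (n i0 : ℕ) (hn : 1 ≤ n) (hi : i0 < n) (k : ℤ) (hk : 1 ≤ k) :
    ∑ l0 ∈ range n, pZ n i0 l0 * intChoose ((n:ℤ) + k - ((l0:ℤ)+1) - 1) (k - ((l0:ℤ)+1))
      = intChoose (k-1) (i0:ℤ) := by
  have step1 : ∑ l0 ∈ range n, pZ n i0 l0 * intChoose ((n:ℤ) + k - ((l0:ℤ)+1) - 1) (k - ((l0:ℤ)+1))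
      = ∑ l0 ∈ Ico i0 n, pZ n i0 l0 * intChoose ((n:ℤ) + k - ((l0:ℤ)+1) - 1) (k - ((l0:ℤ)+1)) := by
    refine (Finset.sum_subset (fun x hx => ?_) (fun x hx hnx => ?_)).symm
    · simp only [mem_Ico, mem_range] at *; omega
    · have hxi : x < i0 := by simp only [mem_Ico, mem_range] at *; omega
      rw [pZ, if_neg (by omega), zero_mul]
  rw [step1, Finset.sum_Ico_eq_sum_range, show n - i0 = (n - 1 - i0) + 1 from by omega]
  have term_eq : ∀ m ∈ range ((n-1-i0)+1),
      pZ n i0 (i0 + m) * intChoose ((n:ℤ) + k - (((i0+m : ℕ):ℤ)+1) - 1) (k - (((i0+m:ℕ):ℤ)+1))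
      = (-1:ℤ)^m * ((n-1-i0).choose m : ℤ) * J (n-1) ((k - i0 - 1) - (m:ℤ)) := by
    intro m _
    rw [pZ, if_pos (Nat.le_add_right _ _), Nat.add_sub_cancel_left]
    rw [show (n:ℤ) + k - (((i0+m:ℕ):ℤ)+1) - 1 = ((n-1 : ℕ):ℤ) + ((k - i0 - 1) - (m:ℤ)) from by push_cast; omega,
        show k - (((i0+m:ℕ):ℤ)+1) = (k - i0 - 1) - (m:ℤ) from by push_cast; ring,
        intChoose_shift]
  rw [Finset.sum_congr rfl term_eq, vand (n-1-i0) (n-1) (by omega) (k - i0 - 1),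
      show n - 1 - (n - 1 - i0) = i0 from by omega,
      show k - 1 = (i0:ℤ) + (k - i0 - 1) from by ring,
      ic_eq_J i0 (k - i0 - 1) (by omega)]

noncomputable def Gf (n : ℕ) (A B : ℂ) (jz k : ℤ) : ℂ :=
  ((intChoose ((n:ℤ)-2) (k-jz-1) : ℤ) : ℂ)
    + A * ((intChoose ((n:ℤ)-2) (k-jz) : ℤ) : ℂ)
    + B * ((intChoose ((n:ℤ)-2) (k-jz+1) : ℤ) : ℂ)

noncomputable def Tf (n : ℕ) (q A B : ℂ) (iz jz k : ℤ) : ℂ :=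
  (-1:ℂ)^(k+1) * ((q^(k-2*jz+2) - q^(2*jz-k-2))/(q - q⁻¹))
    * ((intChoose (k-1) (iz-1) : ℤ) : ℂ) * Gf n A B jz k

lemma G_zero_small {n : ℕ} {A B : ℂ} {jz k : ℤ} (h : k - jz + 1 < 0) : Gf n A B jz k = 0 := by
  rw [Gf, ic_neg (by omega), ic_neg (by omega), ic_neg h]
  simp

lemma G_zero_big {n : ℕ} {A B : ℂ} {jz k : ℤ} (h1 : 0 < k - jz - 1) (h2 : (n:ℤ) - 2 < k - jz - 1) :
    Gf n A B jz k = 0 := by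
  rw [Gf, ic_big h1 h2, ic_big (by omega) (by omega), ic_big (by omega) (by omega)]
  simp

lemma T_zero_left {n : ℕ} {q A B : ℂ} {iz jz k : ℤ} (hj : 1 ≤ jz) (hk : k ≤ 0) :
    Tf n q A B iz jz k = 0 := by
  rcases lt_or_ge (k - jz + 1) 0 with h | h
  · rw [Tf, G_zero_small h, mul_zero]
  · have hj1 : jz = 1 := by omega
    have hk0 : k = 0 := by omega
    subst hj1; subst hk0
    rw [Tf]
    norm_num

lemma T_zero_r1 {n : ℕ} {q A B : ℂ} {iz jz k : ℤ} (hj2 : jz ≤ (n:ℤ)) (hk1 : 2*(n:ℤ) ≤ k)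
    (hk2 : k ≤ 3*(n:ℤ) - 2) : Tf n q A B iz jz k = 0 := by
  rw [Tf, G_zero_big (by omega) (by omega), mul_zero]

lemma T_zero_r2 {n : ℕ} {q A B : ℂ} {iz jz k : ℤ} (hj1 : 1 ≤ jz) (hk1 : 2*jz + (n:ℤ) - 1 ≤ k)
    (hk2 : k ≤ 3*(n:ℤ) - 2) : Tf n q A B iz jz k = 0 := by
  rw [Tf, G_zero_big (by omega) (by omega), mul_zero]

lemma T_zero_l2 {n : ℕ} {q A B : ℂ} {iz jz k : ℤ} (hj2 : jz ≤ (n:ℤ)) (hk : k < 2*jz - (n:ℤ) - 1) :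
    Tf n q A B iz jz k = 0 := by
  rw [Tf, G_zero_small (by omega), mul_zero]

lemma sumM (n : ℕ) (hn : 1 ≤ n) (q A B : ℂ) (iz jz : ℤ) (hj1 : 1 ≤ jz) (hj2 : jz ≤ (n:ℤ)) :
    ∑ k ∈ Icc (1:ℤ) (2*(n:ℤ)-1), Tf n q A B iz jz k
      = ∑ k ∈ Icc (1-(n:ℤ)) (3*(n:ℤ)-2), Tf n q A B iz jz k := by
  refine Finset.sum_subset (Finset.Icc_subset_Icc (by omega) (by omega)) ?_
  intro k hk hnk
  simp only [mem_Icc] at hk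
  simp only [mem_Icc, not_and_or, not_le] at hnk
  rcases le_or_gt k 0 with h | h
  · exact T_zero_left hj1 h
  · exact T_zero_r1 hj2 (by omega) (by omega)

lemma sumK (n : ℕ) (hn : 1 ≤ n) (q A B : ℂ) (iz jz : ℤ) (hj1 : 1 ≤ jz) (hj2 : jz ≤ (n:ℤ)) :
    ∑ k ∈ Icc (2*jz - (n:ℤ) - 1) (2*jz + (n:ℤ) - 2), Tf n q A B iz jz k
      = ∑ k ∈ Icc (1-(n:ℤ)) (3*(n:ℤ)-2), Tf n q A B iz jz k := by
  refine Finset.sum_subset (Finset.Icc_subset_Icc (by omega) (by omega)) ?_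
  intro k hk hnk
  simp only [mem_Icc] at hk
  simp only [mem_Icc, not_and_or, not_le] at hnk
  rcases lt_or_ge k (2*jz - (n:ℤ) - 1) with h | h
  · exact T_zero_l2 hj2 h
  · exact T_zero_r2 hj1 (by omega) (by omega)

lemma reindexK (n : ℕ) (q A B : ℂ) (iz jz : ℤ) :
    ∑ k ∈ Icc (-(n:ℤ)+1) (n:ℤ),
      (-1:ℂ)^(k+1) * ((q^k - q^(-k))/(q - q⁻¹))
        * ((intChoose (2*jz + k - 3) (iz-1) : ℤ) : ℂ)
        * (((intChoose ((n:ℤ)-2) (k+jz-3) : ℤ) : ℂ)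
            + A * ((intChoose ((n:ℤ)-2) (k+jz-2) : ℤ) : ℂ)
            + B * ((intChoose ((n:ℤ)-2) (k+jz-1) : ℤ) : ℂ))
      = ∑ k ∈ Icc (2*jz - (n:ℤ) - 1) (2*jz + (n:ℤ) - 2), Tf n q A B iz jz k := by
  rw [show Icc (2*jz - (n:ℤ) - 1) (2*jz + (n:ℤ) - 2)
        = (Icc (-(n:ℤ)+1) (n:ℤ)).map (addRightEmbedding (2*jz - 2)) from by
      rw [Finset.map_add_right_Icc]; congr 1 <;> ring,
    Finset.sum_map]
  refine Finset.sum_congr rfl fun k hk => ?_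
  simp only [addRightEmbedding_apply]
  rw [Tf, Gf]
  conv_rhs => rw [show k + (2*jz - 2) + 1 = 2*(jz - 1) + (k+1) from by ring,
      zpow_add₀ (by norm_num : (-1:ℂ) ≠ 0),
      Even.neg_one_zpow ⟨jz-1, by ring⟩]
  rw [show k + (2*jz - 2) - 2*jz + 2 = k from by ring,
      show 2*jz - (k + (2*jz - 2)) - 2 = -k from by ring,
      show k + (2*jz - 2) - 1 = 2*jz + k - 3 from by ring,
      show k + (2*jz - 2) - jz - 1 = k + jz - 3 from by ring,
      show k + (2*jz - 2) - jz + 1 = k + jz - 1 from by ring,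
      show k + (2*jz - 2) - jz = k + jz - 2 from by ring]
  ring


end DetMK

theorem det_M_eq_det_K (n : ℕ) (hn : 1 ≤ n) (q ρ τ : ℂ)
    (hq0 : q ≠ 0) (hq1 : q ≠ 1) (hqm1 : q ≠ -1)
    (hρ : 1 + ρ * q ≠ 0) (hτ : τ + q ≠ 0) :
    (Matrix.of fun i j : Fin n =>
      ∑ k ∈ Finset.Icc (1 : ℤ) (2 * (n : ℤ) - 1),
        (-1 : ℂ) ^ (k + 1) *
          ((q ^ (k - 2 * ((j : ℤ) + 1) + 2) - q ^ (2 * ((j : ℤ) + 1) - k - 2)) / (q - q⁻¹)) *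
          (intChoose ((n : ℤ) + k - ((i : ℤ) + 1) - 1) (k - ((i : ℤ) + 1)) : ℂ) *
          ((intChoose ((n : ℤ) - 2) (k - ((j : ℤ) + 1) - 1) : ℂ)
            + ((ρ + q) / (1 + ρ * q) + (1 + τ * q) / (τ + q)) *
                (intChoose ((n : ℤ) - 2) (k - ((j : ℤ) + 1)) : ℂ)
            + ((ρ + q) * (1 + τ * q) / ((1 + ρ * q) * (τ + q))) *
                (intChoose ((n : ℤ) - 2) (k - ((j : ℤ) + 1) + 1) : ℂ))).det =
    (Matrix.of fun i j : Fin n =>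
      ∑ k ∈ Finset.Icc (-(n : ℤ) + 1) (n : ℤ),
        (-1 : ℂ) ^ (k + 1) * ((q ^ k - q ^ (-k)) / (q - q⁻¹)) *
          (intChoose (2 * ((j : ℤ) + 1) + k - 3) (((i : ℤ) + 1) - 1) : ℂ) *
          ((intChoose ((n : ℤ) - 2) (k + ((j : ℤ) + 1) - 3) : ℂ)
            + ((ρ + q) / (1 + ρ * q) + (1 + τ * q) / (τ + q)) *
                (intChoose ((n : ℤ) - 2) (k + ((j : ℤ) + 1) - 2) : ℂ)
            + ((ρ + q) * (1 + τ * q) / ((1 + ρ * q) * (τ + q))) *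
                (intChoose ((n : ℤ) - 2) (k + ((j : ℤ) + 1) - 1) : ℂ))).det := by
  classical
  set A : ℂ := (ρ + q) / (1 + ρ * q) + (1 + τ * q) / (τ + q) with hA
  set B : ℂ := (ρ + q) * (1 + τ * q) / ((1 + ρ * q) * (τ + q)) with hB
  set P : Matrix (Fin n) (Fin n) ℂ := Matrix.of fun i l => ((DetMK.pZ n i l : ℤ) : ℂ) with hP
  have hPdet : P.det = 1 := by
    have ht : P.BlockTriangular id := by
      intro i l hil
      simp only [hP, Matrix.of_apply, DetMK.pZ]
      rw [if_neg (by exact Nat.not_le.2 hil)]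
      simp
    rw [Matrix.det_of_upperTriangular ht]
    apply Finset.prod_eq_one
    intro i _
    simp [hP, DetMK.pZ]
  have main : (Matrix.of fun i j : Fin n =>
      ∑ k ∈ Finset.Icc (-(n : ℤ) + 1) (n : ℤ),
        (-1 : ℂ) ^ (k + 1) * ((q ^ k - q ^ (-k)) / (q - q⁻¹)) *
          (intChoose (2 * ((j : ℤ) + 1) + k - 3) (((i : ℤ) + 1) - 1) : ℂ) *
          ((intChoose ((n : ℤ) - 2) (k + ((j : ℤ) + 1) - 3) : ℂ)
            + A * (intChoose ((n : ℤ) - 2) (k + ((j : ℤ) + 1) - 2) : ℂ)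
            + B * (intChoose ((n : ℤ) - 2) (k + ((j : ℤ) + 1) - 1) : ℂ)))
      = P * (Matrix.of fun i j : Fin n =>
      ∑ k ∈ Finset.Icc (1 : ℤ) (2 * (n : ℤ) - 1),
        (-1 : ℂ) ^ (k + 1) *
          ((q ^ (k - 2 * ((j : ℤ) + 1) + 2) - q ^ (2 * ((j : ℤ) + 1) - k - 2)) / (q - q⁻¹)) *
          (intChoose ((n : ℤ) + k - ((i : ℤ) + 1) - 1) (k - ((i : ℤ) + 1)) : ℂ) *
          ((intChoose ((n : ℤ) - 2) (k - ((j : ℤ) + 1) - 1) : ℂ)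
            + A * (intChoose ((n : ℤ) - 2) (k - ((j : ℤ) + 1)) : ℂ)
            + B * (intChoose ((n : ℤ) - 2) (k - ((j : ℤ) + 1) + 1) : ℂ))) := by
    ext i j
    have hj1 : (1:ℤ) ≤ (j:ℤ) + 1 := by omega
    have hj2 : (j:ℤ) + 1 ≤ (n:ℤ) := by
      have := j.isLt; omega
    rw [Matrix.mul_apply]
    simp only [Matrix.of_apply, hP]
    -- RHS: swap sums and compute inner sum
    have rhs_eq : (∑ l : Fin n, ((DetMK.pZ n i l : ℤ) : ℂ) *
        ∑ k ∈ Finset.Icc (1 : ℤ) (2 * (n : ℤ) - 1),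
        (-1 : ℂ) ^ (k + 1) *
          ((q ^ (k - 2 * ((j : ℤ) + 1) + 2) - q ^ (2 * ((j : ℤ) + 1) - k - 2)) / (q - q⁻¹)) *
          (intChoose ((n : ℤ) + k - ((l : ℤ) + 1) - 1) (k - ((l : ℤ) + 1)) : ℂ) *
          ((intChoose ((n : ℤ) - 2) (k - ((j : ℤ) + 1) - 1) : ℂ)
            + A * (intChoose ((n : ℤ) - 2) (k - ((j : ℤ) + 1)) : ℂ)
            + B * (intChoose ((n : ℤ) - 2) (k - ((j : ℤ) + 1) + 1) : ℂ)))
        = ∑ k ∈ Finset.Icc (1 : ℤ) (2 * (n : ℤ) - 1),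
            DetMK.Tf n q A B ((i : ℤ) + 1) ((j : ℤ) + 1) k := by
      simp only [Finset.mul_sum]
      rw [Finset.sum_comm]
      refine Finset.sum_congr rfl fun k hk => ?_
      have hk1 : (1:ℤ) ≤ k := (Finset.mem_Icc.mp hk).1
      have key : (∑ l : Fin n, ((DetMK.pZ n i l : ℤ) : ℂ) *
          ((intChoose ((n : ℤ) + k - ((l : ℤ) + 1) - 1) (k - ((l : ℤ) + 1)) : ℤ) : ℂ))
          = ((intChoose (k - 1) ((i : ℕ) : ℤ) : ℤ) : ℂ) := by
        rw [← DetMK.inner_int n i hn i.isLt k hk1]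
        push_cast
        rw [Fin.sum_univ_eq_sum_range (fun l0 => ((DetMK.pZ n i l0 : ℤ) : ℂ) *
          ((intChoose ((n:ℤ) + k - ((l0:ℤ) + 1) - 1) (k - ((l0:ℤ) + 1)) : ℤ) : ℂ)) n]
      calc (∑ l : Fin n, ((DetMK.pZ n i l : ℤ) : ℂ) *
          ((-1 : ℂ) ^ (k + 1) *
          ((q ^ (k - 2 * ((j : ℤ) + 1) + 2) - q ^ (2 * ((j : ℤ) + 1) - k - 2)) / (q - q⁻¹)) *
          (intChoose ((n : ℤ) + k - ((l : ℤ) + 1) - 1) (k - ((l : ℤ) + 1)) : ℂ) *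
          ((intChoose ((n : ℤ) - 2) (k - ((j : ℤ) + 1) - 1) : ℂ)
            + A * (intChoose ((n : ℤ) - 2) (k - ((j : ℤ) + 1)) : ℂ)
            + B * (intChoose ((n : ℤ) - 2) (k - ((j : ℤ) + 1) + 1) : ℂ))))
          = ∑ l : Fin n, (((-1 : ℂ) ^ (k + 1) *
          ((q ^ (k - 2 * ((j : ℤ) + 1) + 2) - q ^ (2 * ((j : ℤ) + 1) - k - 2)) / (q - q⁻¹))) *
          (((DetMK.pZ n i l : ℤ) : ℂ) *
            ((intChoose ((n : ℤ) + k - ((l : ℤ) + 1) - 1) (k - ((l : ℤ) + 1)) : ℤ) : ℂ))) *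
          ((intChoose ((n : ℤ) - 2) (k - ((j : ℤ) + 1) - 1) : ℂ)
            + A * (intChoose ((n : ℤ) - 2) (k - ((j : ℤ) + 1)) : ℂ)
            + B * (intChoose ((n : ℤ) - 2) (k - ((j : ℤ) + 1) + 1) : ℂ)) := by
            refine Finset.sum_congr rfl fun l _ => by ring
        _ = (((-1 : ℂ) ^ (k + 1) *
          ((q ^ (k - 2 * ((j : ℤ) + 1) + 2) - q ^ (2 * ((j : ℤ) + 1) - k - 2)) / (q - q⁻¹))) *
          (∑ l : Fin n, ((DetMK.pZ n i l : ℤ) : ℂ) *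
            ((intChoose ((n : ℤ) + k - ((l : ℤ) + 1) - 1) (k - ((l : ℤ) + 1)) : ℤ) : ℂ))) *
          ((intChoose ((n : ℤ) - 2) (k - ((j : ℤ) + 1) - 1) : ℂ)
            + A * (intChoose ((n : ℤ) - 2) (k - ((j : ℤ) + 1)) : ℂ)
            + B * (intChoose ((n : ℤ) - 2) (k - ((j : ℤ) + 1) + 1) : ℂ)) := by
            rw [← Finset.sum_mul, ← Finset.mul_sum]
        _ = DetMK.Tf n q A B ((i : ℤ) + 1) ((j : ℤ) + 1) k := by
            rw [key, DetMK.Tf, DetMK.Gf, show ((i : ℤ) + 1) - 1 = ((i:ℕ):ℤ) from by ring]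
    rw [rhs_eq,
        DetMK.reindexK n q A B ((i : ℤ) + 1) ((j : ℤ) + 1),
        DetMK.sumK n hn q A B ((i : ℤ) + 1) ((j : ℤ) + 1) hj1 hj2,
        ← DetMK.sumM n hn q A B ((i : ℤ) + 1) ((j : ℤ) + 1) hj1 hj2]
  rw [main, Matrix.det_mul, hPdet, one_mul]
end
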